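/- Let G=(V,E) be a weighted locally finite graph and let Ω⊂V be a bounded domain with Ω°≠∅ and ∂Ω≠∅. Let g:Ω×ℝ→ℝ be such that t↦g(x,t) is of class C¹ with ∂_t g(x,0)=0 for all x∈Ω, and set f̄(x)=g(x,0) for x∈Ω. Then there exist δ,ε>0 with the following property: if f∈L²(Ω) with ‖f−f̄‖_{L²(Ω)}<δ, then the problem −Δu + g(x,u) = f in Ω° with u=0 on ∂Ω admits a unique solution u∈W^{1,2}_0(Ω) with ‖u‖_{W^{1,2}_0(Ω)}<ε. -/

import Mathlib

open scoped BigOperators NNReal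

/-- A weighted locally finite (non-oriented) graph on the vertex set `V`:
a symmetric non-negative weight `w` such that every vertex belongs to finitely
many edges (`xy ∈ E` iff `w x y > 0`). -/
structure WLFG (V : Type*) where
  w : V → V → ℝ
  symm : ∀ x y, w x y = w y x
  nonneg : ∀ x y, 0 ≤ w x y
  locFin : ∀ x, {y | w x y ≠ 0}.Finite

namespace WLFG

variable {V : Type*} (G : WLFG V)

/-- The edge (adjacency) relation: `x ∼ y` iff `w x y > 0`. -/
def Adj (x y : V) : Prop := 0 < G.w x y

/-- The measure `𝔪(x) = ∑_{y ∈ V} w x y`. -/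
noncomputable def mes (x : V) : ℝ := ∑ᶠ y, G.w x y

/-- `∫_A u d𝔪 = ∑_{x ∈ A} u x * 𝔪 x`. -/
noncomputable def integral (A : Set V) (u : V → ℝ) : ℝ := ∑ᶠ x ∈ A, u x * G.mes x

/-- The vertex boundary `∂Ω = {x ∈ Ω : ∃ y ∉ Ω, xy ∈ E}`. -/
def bdry (Ω : Set V) : Set V := {x | x ∈ Ω ∧ ∃ y, y ∉ Ω ∧ G.Adj x y}

/-- The vertex interior `Ω° = Ω \ ∂Ω`. -/
def intr (Ω : Set V) : Set V := Ω \ G.bdry Ω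

/-- `Ω` is connected as a subgraph: any two of its vertices are joined by a
path inside `Ω`. -/
def ConnectedIn (Ω : Set V) : Prop :=
  ∀ x ∈ Ω, ∀ y ∈ Ω, Relation.ReflTransGen (fun a b => a ∈ Ω ∧ b ∈ Ω ∧ G.Adj a b) x y

/-- A bounded domain: a connected subgraph, bounded with respect to the vertex
path distance; for a locally finite graph this means connected and finite. -/
def IsBoundedDomain (Ω : Set V) : Prop := G.ConnectedIn Ω ∧ Ω.Finite

/-- The graph Laplacian `Δu(x) = (1/𝔪(x)) ∑_y w_{xy}(u(y) - u(x))`. -/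
noncomputable def lap (u : V → ℝ) (x : V) : ℝ :=
  (1 / G.mes x) * ∑ᶠ y, G.w x y * (u y - u x)

/-- The gradient form `Γ(u,v)(x) = (1/(2𝔪(x))) ∑_y w_{xy}(u(y)-u(x))(v(y)-v(x))`. -/
noncomputable def gamma (u v : V → ℝ) (x : V) : ℝ :=
  (1 / (2 * G.mes x)) * ∑ᶠ y, G.w x y * (u y - u x) * (v y - v x)

/-- The slope `|∇u|(x) = √(Γ(u,u)(x))`. -/
noncomputable def slope (u : V → ℝ) (x : V) : ℝ := Real.sqrt (G.gamma u u x)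

/-- The `k`-slope: `|∇^k u| = |∇(Δ^{(k-1)/2} u)|` for `k` odd and `|Δ^{k/2} u|`
for `k` even. -/
noncomputable def mslope (k : ℕ) (u : V → ℝ) (x : V) : ℝ :=
  if k % 2 = 1 then G.slope ((G.lap)^[(k - 1) / 2] u) x
  else |(G.lap)^[k / 2] u x|

/-- The `L^p(Ω)` norm `(∑_{x ∈ Ω} |u x|^p 𝔪 x)^(1/p)` for a real exponent `p`. -/
noncomputable def lpNorm (Ω : Set V) (p : ℝ) (u : V → ℝ) : ℝ :=
  (∑ᶠ x ∈ Ω, |u x| ^ p * G.mes x) ^ (1 / p)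

/-- The `L^∞(Ω)` norm `max_{x ∈ Ω} |u x|`. -/
noncomputable def linfNorm (_G : WLFG V) (Ω : Set V) (u : V → ℝ) : ℝ :=
  sSup ((fun x => |u x|) '' Ω)

/-- The `W^{m,p}_0(Ω)` norm `‖∇^m u‖_{L^p(Ω)}`. -/
noncomputable def wNorm (Ω : Set V) (k : ℕ) (p : ℝ) (u : V → ℝ) : ℝ :=
  G.lpNorm Ω p (G.mslope k u)

/-- Membership in `W^{m,p}_0(Ω)`: `|∇^j u| = 0` on `∂Ω` for all `0 ≤ j ≤ m-1`. -/
def MemW0 (Ω : Set V) (k : ℕ) (u : V → ℝ) : Prop :=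
  ∀ j < k, ∀ x ∈ G.bdry Ω, G.mslope j u x = 0

/-- The `p`-Laplacian
`Δ_p u(x) = (1/𝔪(x)) ∑_{y ∈ Ω} (|∇u|^{p-2}(y) + |∇u|^{p-2}(x)) w_{xy} (u(y)-u(x))`. -/
noncomputable def plap (Ω : Set V) (p : ℝ) (u : V → ℝ) (x : V) : ℝ :=
  (1 / G.mes x) *
    ∑ᶠ y ∈ Ω, (G.slope u y ^ (p - 2) + G.slope u x ^ (p - 2)) * G.w x y * (u y - u x)

/-- The distributional pairing `∫_Ω L_{m,p} u · φ d𝔪` defining the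
`(m,p)`-Laplacian. -/
noncomputable def mpPairing (Ω : Set V) (k : ℕ) (p : ℝ) (u φ : V → ℝ) : ℝ :=
  if k % 2 = 1 then
    ∑ᶠ x ∈ Ω, G.mslope k u x ^ (p - 2) *
      G.gamma ((G.lap)^[(k - 1) / 2] u) ((G.lap)^[(k - 1) / 2] φ) x * G.mes x
  else
    ∑ᶠ x ∈ Ω, G.mslope k u x ^ (p - 2) *
      ((G.lap)^[k / 2] u x) * ((G.lap)^[k / 2] φ x) * G.mes x

/-- `u ∈ W^{m,p}_0(Ω)` solves `L_{m,p} u = g` in `Ω°` (together with the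
boundary conditions `|∇^j u| = 0` on `∂Ω`, `0 ≤ j ≤ m-1`), where the
`(m,p)`-Laplacian is defined in the distributional sense. -/
def IsMPSolution (Ω : Set V) (k : ℕ) (p : ℝ) (u g : V → ℝ) : Prop :=
  G.MemW0 Ω k u ∧
  ∃ L : V → ℝ,
    (∀ φ : V → ℝ, G.MemW0 Ω k φ →
      G.mpPairing Ω k p u φ = G.integral Ω (fun x => L x * φ x)) ∧
    ∀ x ∈ G.intr Ω, L x = g x

end WLFG
section Aux

open Classical in
/-- Extension by zero of a function on the interior. -/
noncomputable def extZ {V : Type*} (G : WLFG V) (Ω : Set V) (v : ↥(G.intr Ω) → ℝ) : V → ℝ :=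
  fun x => if h : x ∈ G.intr Ω then v ⟨x, h⟩ else 0

/-- The Dirichlet energy, as a finite sum. -/
noncomputable def enE {V : Type*} (G : WLFG V) (Ωf : Finset V) (u : V → ℝ) : ℝ :=
  ∑ x ∈ Ωf, ∑ y ∈ (G.locFin x).toFinset, (1/2) * (G.w x y * (u y - u x)^2)

namespace Aux

variable {V : Type*} (G : WLFG V)

theorem mes_eq (x : V) : G.mes x = ∑ y ∈ (G.locFin x).toFinset, G.w x y := by
  refine finsum_eq_finset_sum_of_support_subset _ ?_
  intro y hy
  simpa using hy

theorem mes_nonneg (x : V) : 0 ≤ G.mes x := by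
  rw [mes_eq]
  exact Finset.sum_nonneg fun y _ => G.nonneg x y

theorem lap_eq (u : V → ℝ) (x : V) :
    G.lap u x = (1 / G.mes x) * ∑ y ∈ (G.locFin x).toFinset, G.w x y * (u y - u x) := by
  unfold WLFG.lap
  congr 1
  refine finsum_eq_finset_sum_of_support_subset _ ?_
  intro y hy
  simp only [Function.mem_support] at hy
  have : G.w x y ≠ 0 := fun h => hy (by simp [h])
  simpa using this

theorem gamma_self_eq (u : V → ℝ) (x : V) :
    G.gamma u u x = (1 / (2 * G.mes x)) * ∑ y ∈ (G.locFin x).toFinset, G.w x y * (u y - u x)^2 := by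
  unfold WLFG.gamma
  congr 1
  rw [show (fun y => G.w x y * (u y - u x) * (u y - u x)) = fun y => G.w x y * (u y - u x)^2 by
    funext y; ring] at *
  refine finsum_eq_finset_sum_of_support_subset _ ?_
  intro y hy
  simp only [Function.mem_support] at hy
  have : G.w x y ≠ 0 := fun h => hy (by simp [h])
  simpa using this

theorem gamma_self_nonneg (u : V → ℝ) (x : V) : 0 ≤ G.gamma u u x := by
  rw [gamma_self_eq]
  apply mul_nonneg
  · apply one_div_nonneg.2
    have := mes_nonneg G x
    linarith
  · exact Finset.sum_nonneg fun y _ => mul_nonneg (G.nonneg x y) (sq_nonneg _)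

end Aux
end Aux
namespace Aux
variable {V : Type*} (G : WLFG V) {Ω : Set V}

theorem mes_pos (hconn : G.ConnectedIn Ω) (hint : (G.intr Ω).Nonempty)
    (hbd : (G.bdry Ω).Nonempty) {x : V} (hx : x ∈ Ω) : 0 < G.mes x := by
  obtain ⟨a, ha⟩ := hint
  obtain ⟨b, hb⟩ := hbd
  have hab : a ≠ b := fun h => ha.2 (h ▸ hb)
  have key : ∃ c, G.Adj x c := by
    rcases eq_or_ne x a with rfl | hxa
    · have hpath := hconn x hx b hb.1
      rcases hpath.cases_head with h | ⟨c, hc, _⟩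
      · exact absurd h hab
      · exact ⟨c, hc.2.2⟩
    · have hpath := hconn x hx a ha.1
      rcases hpath.cases_head with h | ⟨c, hc, _⟩
      · exact absurd h hxa
      · exact ⟨c, hc.2.2⟩
  obtain ⟨c, hc⟩ := key
  have hcmem : c ∈ (G.locFin x).toFinset := by
    simp only [Set.Finite.mem_toFinset, Set.mem_setOf_eq]
    exact ne_of_gt hc
  rw [mes_eq]
  calc (0:ℝ) < G.w x c := hc
    _ ≤ _ := Finset.single_le_sum (fun y _ => G.nonneg x y) hcmem

theorem enE_nonneg (Ωf : Finset V) (u : V → ℝ) : 0 ≤ enE G Ωf u :=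
  Finset.sum_nonneg fun x _ => Finset.sum_nonneg fun y _ =>
    mul_nonneg (by norm_num) (mul_nonneg (G.nonneg x y) (sq_nonneg _))

theorem edge_le_enE {Ωf : Finset V} {a : V} (ha : a ∈ Ωf) (y : V) (u : V → ℝ) :
    (1/2) * (G.w a y * (u y - u a)^2) ≤ enE G Ωf u := by
  have hterm : ∀ b z : V, (0:ℝ) ≤ (1/2) * (G.w b z * (u z - u b)^2) := fun b z =>
    mul_nonneg (by norm_num) (mul_nonneg (G.nonneg b z) (sq_nonneg _))
  rcases eq_or_ne (G.w a y) 0 with h0 | h0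
  · rw [h0]
    simpa using enE_nonneg G Ωf u
  · have hy : y ∈ (G.locFin a).toFinset := by simpa using h0
    calc (1/2) * (G.w a y * (u y - u a)^2)
        ≤ ∑ z ∈ (G.locFin a).toFinset, (1/2) * (G.w a z * (u z - u a)^2) :=
          Finset.single_le_sum (f := fun z => (1/2) * (G.w a z * (u z - u a)^2))
            (fun z _ => hterm a z) hy
      _ ≤ enE G Ωf u :=
          Finset.single_le_sum (f := fun x => ∑ z ∈ (G.locFin x).toFinset,
            (1/2) * (G.w x z * (u z - u x)^2))
            (fun x _ => Finset.sum_nonneg fun z _ => hterm x z) ha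

theorem enE_le (Ωf : Finset V) (u : V → ℝ) (M : ℝ) (hM : ∀ t, |u t| ≤ M) :
    enE G Ωf u ≤ (∑ x ∈ Ωf, ∑ y ∈ (G.locFin x).toFinset, 2 * G.w x y) * M^2 := by
  rw [Finset.sum_mul]
  refine Finset.sum_le_sum fun x _ => ?_
  rw [Finset.sum_mul]
  refine Finset.sum_le_sum fun y _ => ?_
  have h1 := hM x
  have h2 := hM y
  have := abs_nonneg (u x)
  have hw := G.nonneg x y
  have : (u y - u x)^2 ≤ 4 * M^2 := by
    have := abs_le.1 h1; have := abs_le.1 h2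
    nlinarith
  nlinarith

theorem poincare (hconn : G.ConnectedIn Ω) (hfin : Ω.Finite) (hbd : (G.bdry Ω).Nonempty) :
    ∃ C : ℝ, 0 ≤ C ∧ ∀ x ∈ Ω, ∀ u : V → ℝ, (∀ z ∈ G.bdry Ω, u z = 0) →
      (u x)^2 ≤ C * enE G hfin.toFinset u := by
  obtain ⟨b, hb⟩ := hbd
  have key : ∀ x : V, ∃ C : ℝ, 0 ≤ C ∧ ∀ u : V → ℝ, (∀ z ∈ G.bdry Ω, u z = 0) →
      x ∈ Ω → (u x)^2 ≤ C * enE G hfin.toFinset u := by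
    intro x
    by_cases hx : x ∈ Ω
    · have hpath := hconn b hb.1 x hx
      clear hx
      induction hpath with
      | refl =>
          exact ⟨0, le_refl 0, fun u hu _ => by
            rw [hu b hb]; simp⟩
      | tail hstep hlast ih =>
          rename_i c z
          obtain ⟨C, hC0, hC⟩ := ih
          have hcz : 0 < G.w c z := hlast.2.2
          refine ⟨2*C + 4/(G.w c z),
            add_nonneg (by linarith) (div_nonneg (by norm_num) hcz.le), fun u hu _ => ?_⟩
          have hcΩ : c ∈ hfin.toFinset := by simpa using hlast.1
          have hedge := edge_le_enE G hcΩ z u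
          have hen := enE_nonneg G hfin.toFinset u
          have hIH := hC u hu hlast.1
          have hsq : (u z)^2 ≤ 2*(u c)^2 + 2*(u z - u c)^2 := by nlinarith [sq_nonneg (2*(u c) - u z)]
          have hdiff : (u z - u c)^2 ≤ (2 / G.w c z) * enE G hfin.toFinset u := by
            rw [div_mul_eq_mul_div, le_div_iff₀ hcz]
            nlinarith
          calc (u z)^2 ≤ 2*(u c)^2 + 2*(u z - u c)^2 := hsq
            _ ≤ 2*(C * enE G hfin.toFinset u) + 2*((2 / G.w c z) * enE G hfin.toFinset u) := by
                nlinarith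
            _ = (2*C + 4/(G.w c z)) * enE G hfin.toFinset u := by ring
    · exact ⟨0, le_refl 0, fun u _ hx' => absurd hx' hx⟩
  choose Cf hCf0 hCf using key
  refine ⟨∑ x ∈ hfin.toFinset, Cf x, Finset.sum_nonneg fun x _ => hCf0 x, fun x hx u hu => ?_⟩
  have hen := enE_nonneg G hfin.toFinset u
  calc (u x)^2 ≤ Cf x * enE G hfin.toFinset u := hCf x u hu hx
    _ ≤ (∑ y ∈ hfin.toFinset, Cf y) * enE G hfin.toFinset u := by
        have : Cf x ≤ ∑ y ∈ hfin.toFinset, Cf y :=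
          Finset.single_le_sum (fun y _ => hCf0 y) (by simpa using hx)
        nlinarith

end Aux
namespace Aux
variable {V : Type*} (G : WLFG V) {Ω : Set V}

theorem lpNorm_eq_sqrt (hfin : Ω.Finite) (h : V → ℝ) :
    G.lpNorm Ω 2 h = Real.sqrt (∑ x ∈ hfin.toFinset, (h x)^2 * G.mes x) := by
  unfold WLFG.lpNorm
  have hc : (∑ᶠ x ∈ Ω, |h x| ^ (2:ℝ) * G.mes x)
      = ∑ x ∈ hfin.toFinset, (h x)^2 * G.mes x := by
    rw [← finsum_mem_coe_finset, hfin.coe_toFinset]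
    refine finsum_mem_congr rfl fun x _ => ?_
    congr 1
    rw [show ((2:ℝ)) = ((2:ℕ):ℝ) by norm_num, Real.rpow_natCast, sq_abs]
  rw [hc, Real.sqrt_eq_rpow]

theorem mslope_one (u : V → ℝ) : G.mslope 1 u = G.slope u := by
  funext x
  simp [WLFG.mslope]

theorem wNorm_eq_sqrt_enE (hfin : Ω.Finite) (hm : ∀ x ∈ Ω, 0 < G.mes x) (u : V → ℝ) :
    G.wNorm Ω 1 2 u = Real.sqrt (enE G hfin.toFinset u) := by
  unfold WLFG.wNorm
  rw [mslope_one, lpNorm_eq_sqrt G hfin]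
  congr 1
  refine Finset.sum_congr rfl fun x hx => ?_
  have hxΩ : x ∈ Ω := by simpa using hx
  have hmx := hm x hxΩ
  have h1 : (G.slope u x)^2 = G.gamma u u x := Real.sq_sqrt (gamma_self_nonneg G u x)
  rw [h1, gamma_self_eq]
  set S := ∑ y ∈ (G.locFin x).toFinset, G.w x y * (u y - u x)^2 with hS
  have hgoal : 1/(2*G.mes x) * S * G.mes x = 1/2 * S := by
    field_simp
  rw [hgoal, hS, Finset.mul_sum]

end Aux
namespace Aux
variable {V : Type*} (G : WLFG V) (Ω : Set V)

theorem extZ_mem (v : ↥(G.intr Ω) → ℝ) {x : V} (h : x ∈ G.intr Ω) :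
    extZ G Ω v x = v ⟨x, h⟩ := dif_pos h

theorem extZ_not_mem (v : ↥(G.intr Ω) → ℝ) {x : V} (h : x ∉ G.intr Ω) :
    extZ G Ω v x = 0 := dif_neg h

theorem extZ_add (v v' : ↥(G.intr Ω) → ℝ) (x : V) :
    extZ G Ω (v + v') x = extZ G Ω v x + extZ G Ω v' x := by
  unfold extZ
  split
  · simp
  · simp

theorem extZ_smul (c : ℝ) (v : ↥(G.intr Ω) → ℝ) (x : V) :
    extZ G Ω (c • v) x = c * extZ G Ω v x := by
  unfold extZ
  split
  · simp
  · simp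

/-- The Dirichlet Laplacian `v ↦ -Δ(extension of v by zero)` restricted to the interior. -/
noncomputable def dirL : (↥(G.intr Ω) → ℝ) →ₗ[ℝ] (↥(G.intr Ω) → ℝ) where
  toFun v := fun x => -G.lap (extZ G Ω v) x
  map_add' v v' := by
    funext x
    simp only [lap_eq, Pi.add_apply]
    rw [← neg_add, ← mul_add, ← Finset.sum_add_distrib]
    congr 2
    refine Finset.sum_congr rfl fun y _ => ?_
    rw [extZ_add, extZ_add]
    ring
  map_smul' c v := by
    funext x
    simp only [lap_eq, RingHom.id_apply, Pi.smul_apply, smul_eq_mul]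
    have hpt : ∀ y, G.w x y * (extZ G Ω (c • v) y - extZ G Ω (c • v) x)
        = c * (G.w x y * (extZ G Ω v y - extZ G Ω v x)) := fun y => by
      rw [extZ_smul, extZ_smul]; ring
    rw [Finset.sum_congr rfl fun y _ => hpt y, ← Finset.mul_sum]
    ring

variable {Ω}

theorem dirL_inj (hconn : G.ConnectedIn Ω) (hfin : Ω.Finite)
    (hint : (G.intr Ω).Nonempty) (hbd : (G.bdry Ω).Nonempty) :
    Function.Injective (dirL G Ω) := by
  have hm : ∀ x ∈ Ω, 0 < G.mes x := fun x hx => mes_pos G hconn hint hbd hx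
  classical
  refine (injective_iff_map_eq_zero (dirL G Ω)).2 fun v hL => ?_
  set u : V → ℝ := extZ G Ω v with hu
  set Ωf : Finset V := hfin.toFinset with hΩf
  set T : Finset V := Ωf ∪ Ωf.biUnion (fun x => (G.locFin x).toFinset) with hT
  have hmemΩf : ∀ x ∈ Ω, x ∈ Ωf := fun x hx => by simpa [hΩf] using hx
  have hΩT : ∀ x ∈ Ω, x ∈ T := fun x hx => Finset.mem_union_left _ (hmemΩf x hx)
  have hST : ∀ x ∈ Ω, (G.locFin x).toFinset ⊆ T := fun x hx y hy =>
    Finset.mem_union_right _ (Finset.mem_biUnion.2 ⟨x, hmemΩf x hx, hy⟩)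
  have hsupp : ∀ t, u t ≠ 0 → t ∈ G.intr Ω := by
    intro t ht
    by_contra h
    exact ht (extZ_not_mem G Ω v h)
  -- Step A
  have stepA : ∀ x ∈ T, (∑ y ∈ T, G.w x y * (u x - u y)) * u x = 0 := by
    intro x _
    rcases eq_or_ne (u x) 0 with h0 | h0
    · rw [h0, mul_zero]
    · have hxint : x ∈ G.intr Ω := hsupp x h0
      have hxΩ : x ∈ Ω := hxint.1
      have hTS : ∑ y ∈ T, G.w x y * (u x - u y)
          = ∑ y ∈ (G.locFin x).toFinset, G.w x y * (u x - u y) := by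
        refine (Finset.sum_subset (hST x hxΩ) fun y _ hy => ?_).symm
        have : G.w x y = 0 := by
          by_contra hw
          exact hy (by simpa using hw)
        rw [this, zero_mul]
      have hlap : G.lap u x = 0 := by
        have := congrFun hL ⟨x, hxint⟩
        simpa [dirL, hu] using this
      have hsum : ∑ y ∈ (G.locFin x).toFinset, G.w x y * (u y - u x) = 0 := by
        rw [lap_eq] at hlap
        rcases mul_eq_zero.1 hlap with h | h
        · exact absurd h (one_div_ne_zero (hm x hxΩ).ne')
        · exact h
      have : ∑ y ∈ (G.locFin x).toFinset, G.w x y * (u x - u y) = 0 := by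
        have : ∑ y ∈ (G.locFin x).toFinset, G.w x y * (u x - u y)
            = - ∑ y ∈ (G.locFin x).toFinset, G.w x y * (u y - u x) := by
          rw [← Finset.sum_neg_distrib]
          exact Finset.sum_congr rfl fun y _ => by ring
        rw [this, hsum, neg_zero]
      rw [hTS, this, zero_mul]
  -- Step B
  have stepB : ∑ x ∈ T, ∑ y ∈ T, G.w x y * (u x - u y)^2 = 0 := by
    have hA : ∑ x ∈ T, ∑ y ∈ T, G.w x y * (u x - u y) * u x = 0 := by
      refine Finset.sum_eq_zero fun x hx => ?_
      rw [← Finset.sum_mul]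
      exact stepA x hx
    have hB : ∑ x ∈ T, ∑ y ∈ T, G.w x y * (u x - u y) * u y = 0 := by
      rw [Finset.sum_comm]
      have : ∀ x ∈ T, ∀ y ∈ T, G.w y x * (u y - u x) * u x
          = - (G.w x y * (u x - u y) * u x) := by
        intro x _ y _
        rw [G.symm y x]
        ring
      calc ∑ x ∈ T, ∑ y ∈ T, G.w y x * (u y - u x) * u x
          = ∑ x ∈ T, ∑ y ∈ T, - (G.w x y * (u x - u y) * u x) :=
            Finset.sum_congr rfl fun x hx => Finset.sum_congr rfl fun y hy => this x hx y hy
        _ = - ∑ x ∈ T, ∑ y ∈ T, G.w x y * (u x - u y) * u x := by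
            simp [Finset.sum_neg_distrib]
        _ = 0 := by
            have h2 : ∑ x ∈ T, ∑ y ∈ T, G.w x y * (u x - u y) * u x = 0 := by
              refine Finset.sum_eq_zero fun x hx => ?_
              rw [← Finset.sum_mul]
              exact stepA x hx
            rw [h2, neg_zero]
    calc ∑ x ∈ T, ∑ y ∈ T, G.w x y * (u x - u y)^2
        = ∑ x ∈ T, ∑ y ∈ T, (G.w x y * (u x - u y) * u x - G.w x y * (u x - u y) * u y) :=
          Finset.sum_congr rfl fun x _ => Finset.sum_congr rfl fun y _ => by ring
      _ = (∑ x ∈ T, ∑ y ∈ T, G.w x y * (u x - u y) * u x)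
          - ∑ x ∈ T, ∑ y ∈ T, G.w x y * (u x - u y) * u y := by
          rw [← Finset.sum_sub_distrib]
          exact Finset.sum_congr rfl fun x _ => Finset.sum_sub_distrib _ _
      _ = 0 := by rw [hA, hB, sub_zero]
  -- Step C : along edges within reach, u is constant
  have stepC : ∀ a ∈ Ω, ∀ c, G.w a c ≠ 0 → u a = u c := by
    intro a ha c hw
    have haT := hΩT a ha
    have hcT : c ∈ T := hST a ha (by simpa using hw)
    have hnn : ∀ x ∈ T, ∀ y ∈ T, 0 ≤ G.w x y * (u x - u y)^2 := fun x _ y _ =>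
      mul_nonneg (G.nonneg x y) (sq_nonneg _)
    have houter := (Finset.sum_eq_zero_iff_of_nonneg fun x hx =>
      Finset.sum_nonneg fun y hy => hnn x hx y hy).1 stepB a haT
    have hterm := (Finset.sum_eq_zero_iff_of_nonneg fun y hy => hnn a haT y hy).1 houter c hcT
    have : (u a - u c)^2 = 0 := by
      rcases mul_eq_zero.1 hterm with h | h
      · exact absurd h hw
      · exact h
    have := sq_eq_zero_iff.1 this
    linarith [sub_eq_zero.1 this]
  -- Step D : propagate to the boundary
  obtain ⟨b, hb⟩ := hbd
  funext x
  have hx := x.2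
  have hgen : ∀ z, Relation.ReflTransGen (fun a b => a ∈ Ω ∧ b ∈ Ω ∧ G.Adj a b) x.1 z →
      u x.1 = u z := by
    intro z hz
    induction hz with
    | refl => rfl
    | tail hstep hlast ih =>
        rename_i c z'
        exact ih.trans (stepC c hlast.1 z' (ne_of_gt hlast.2.2))
  have hconst : u x.1 = u b := hgen b (hconn x.1 hx.1 b hb.1)
  have hub : u b = 0 := extZ_not_mem G Ω v (fun h => h.2 hb)
  have := hconst.trans hub
  rw [hu] at this
  rw [extZ_mem G Ω v hx] at this
  simpa using this

end Aux

set_option maxHeartbeats 1000000 in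
/-- Lemma 5.2: for `g(x,·)` of class `C¹` with `∂_t g(x,0) = 0`,
and `f̄ = g(·,0)`, there exist `δ, ε > 0` such that for every `f ∈ L²(Ω)` with
`‖f - f̄‖_{L²(Ω)} < δ` the problem `-Δu + g(x,u) = f` in `Ω°`, `u = 0` on `∂Ω`,
admits a unique solution `u ∈ W^{1,2}_0(Ω)` with `‖u‖_{W^{1,2}_0(Ω)} < ε`. -/
theorem dirichlet_local_wellposed {V : Type*} (G : WLFG V) (Ω : Set V)
    (hΩ : G.IsBoundedDomain Ω) (hint : (G.intr Ω).Nonempty) (hbd : (G.bdry Ω).Nonempty)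
    (g : V → ℝ → ℝ)
    (hgC1 : ∀ x ∈ Ω, ContDiff ℝ 1 fun t => g x t)
    (hg'0 : ∀ x ∈ Ω, deriv (fun t => g x t) 0 = 0) :
    ∃ δ ε : ℝ, 0 < δ ∧ 0 < ε ∧ ∀ f : V → ℝ,
      G.lpNorm Ω 2 (fun x => f x - g x 0) < δ →
      ∃ u : V → ℝ,
        ((∀ x ∈ G.intr Ω, -G.lap u x + g x (u x) = f x) ∧
          (∀ x ∈ G.bdry Ω, u x = 0) ∧ G.wNorm Ω 1 2 u < ε) ∧
        ∀ u' : V → ℝ,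
          ((∀ x ∈ G.intr Ω, -G.lap u' x + g x (u' x) = f x) ∧
            (∀ x ∈ G.bdry Ω, u' x = 0) ∧ G.wNorm Ω 1 2 u' < ε) →
          Set.EqOn u' u Ω := by
  classical
  obtain ⟨hconn, hfin⟩ := hΩ
  have hm : ∀ x ∈ Ω, 0 < G.mes x := fun x hx => Aux.mes_pos G hconn hint hbd hx
  haveI : Fintype ↥(G.intr Ω) := (hfin.subset Set.diff_subset).fintype
  have hinj := Aux.dirL_inj G hconn hfin hint hbd
  have hsurj : Function.Surjective (Aux.dirL G Ω) := LinearMap.injective_iff_surjective.1 hinj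
  let Leq : (↥(G.intr Ω) → ℝ) ≃ₗ[ℝ] (↥(G.intr Ω) → ℝ) :=
    LinearEquiv.ofBijective (Aux.dirL G Ω) ⟨hinj, hsurj⟩
  let L' : (↥(G.intr Ω) → ℝ) ≃L[ℝ] (↥(G.intr Ω) → ℝ) := Leq.toContinuousLinearEquiv
  have hcoe : ∀ v, (L' : (↥(G.intr Ω) → ℝ) →L[ℝ] (↥(G.intr Ω) → ℝ)) v = Aux.dirL G Ω v :=
    fun v => rfl
  -- the nonlinear map
  let Φ : (↥(G.intr Ω) → ℝ) → (↥(G.intr Ω) → ℝ) :=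
    fun v x => -G.lap (extZ G Ω v) x.1 + g x.1 (v x)
  -- strict differentiability at 0 with invertible derivative L'
  have hF : HasStrictFDerivAt Φ (L' : (↥(G.intr Ω) → ℝ) →L[ℝ] (↥(G.intr Ω) → ℝ)) 0 := by
    apply hasStrictFDerivAt_pi'.2
    intro i
    have h1 : HasStrictFDerivAt (fun v : ↥(G.intr Ω) → ℝ => Aux.dirL G Ω v i)
        ((ContinuousLinearMap.proj i).comp
          (L' : (↥(G.intr Ω) → ℝ) →L[ℝ] (↥(G.intr Ω) → ℝ))) 0 := by
      have := ((ContinuousLinearMap.proj (R := ℝ) (φ := fun _ : ↥(G.intr Ω) => ℝ) i).comp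
        (L' : (↥(G.intr Ω) → ℝ) →L[ℝ] (↥(G.intr Ω) → ℝ))).hasStrictFDerivAt
        (x := (0 : ↥(G.intr Ω) → ℝ))
      convert this using 2
      rfl
    have hg1 : HasStrictDerivAt (fun t => g i.1 t) 0 0 := by
      have h : HasStrictDerivAt (fun t => g i.1 t) (deriv (fun t => g i.1 t) 0) 0 :=
        (hgC1 i.1 i.2.1).hasStrictDerivAt one_ne_zero
      rwa [hg'0 i.1 i.2.1] at h
    have hev := (ContinuousLinearMap.proj (R := ℝ)
        (φ := fun _ : ↥(G.intr Ω) => ℝ) i).hasStrictFDerivAt (x := (0 : ↥(G.intr Ω) → ℝ))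
    have h2 : HasStrictFDerivAt (fun v : ↥(G.intr Ω) → ℝ => g i.1 (v i))
        ((0:ℝ) • (ContinuousLinearMap.proj (R := ℝ) (φ := fun _ : ↥(G.intr Ω) => ℝ) i)) 0 :=
      hg1.comp_hasStrictFDerivAt (0 : ↥(G.intr Ω) → ℝ) hev
    have hsum := h1.add h2
    have hder : ((ContinuousLinearMap.proj (R := ℝ) (φ := fun _ : ↥(G.intr Ω) => ℝ) i).comp
          (L' : (↥(G.intr Ω) → ℝ) →L[ℝ] (↥(G.intr Ω) → ℝ)))
        + (0:ℝ) • (ContinuousLinearMap.proj (R := ℝ) (φ := fun _ : ↥(G.intr Ω) => ℝ) i)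
        = (ContinuousLinearMap.proj i).comp
            (L' : (↥(G.intr Ω) → ℝ) →L[ℝ] (↥(G.intr Ω) → ℝ)) := by
      simp
    rw [hder] at hsum
    exact hsum
  -- local inverse and neighborhoods
  have hloc := hF.eventually_left_inverse
  rw [Metric.eventually_nhds_iff] at hloc
  obtain ⟨r, hr0, hrinv⟩ := hloc
  obtain ⟨Cp, hCp0, hCp⟩ := Aux.poincare G hconn hfin hbd
  set CE : ℝ := ∑ x ∈ hfin.toFinset, ∑ y ∈ (G.locFin x).toFinset, 2 * G.w x y with hCEdef
  have hCE0 : 0 ≤ CE :=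
    Finset.sum_nonneg fun x _ => Finset.sum_nonneg fun y _ =>
      mul_nonneg (by norm_num) (G.nonneg x y)
  set ε : ℝ := r / Real.sqrt (Cp + 1) with hεdef
  have hsCp : 0 < Real.sqrt (Cp + 1) := Real.sqrt_pos.2 (by linarith)
  have hε0 : 0 < ε := div_pos hr0 hsCp
  set r₂ : ℝ := min r (ε / Real.sqrt (CE + 1)) with hr₂def
  have hsCE : 0 < Real.sqrt (CE + 1) := Real.sqrt_pos.2 (by linarith)
  have hr₂0 : 0 < r₂ := lt_min hr0 (div_pos hε0 hsCE)
  have himg : Φ '' Metric.ball 0 r₂ ∈ nhds (Φ 0) := by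
    rw [← hF.map_nhds_eq_of_equiv]
    exact Filter.image_mem_map (Metric.ball_mem_nhds 0 hr₂0)
  obtain ⟨S, hSsub, hSopen, hS0⟩ := mem_nhds_iff.1 himg
  obtain ⟨δE, hδE0, hδEball⟩ := Metric.isOpen_iff.1 hSopen _ hS0
  have hball : Metric.ball (Φ 0) δE ⊆ Φ '' Metric.ball 0 r₂ :=
    fun z hz => hSsub (hδEball hz)
  -- lower bound for the measure
  obtain ⟨a₀, ha₀⟩ := hint
  have hne : (hfin.toFinset).Nonempty := ⟨a₀, by simpa using ha₀.1⟩
  set m₀ : ℝ := (hfin.toFinset).inf' hne G.mes with hm₀def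
  have hm₀pos : 0 < m₀ := by
    rw [hm₀def, Finset.lt_inf'_iff]
    intro b hb
    exact hm b (by simpa using hb)
  have hm₀le : ∀ x ∈ Ω, m₀ ≤ G.mes x := fun x hx =>
    Finset.inf'_le _ (by simpa using hx)
  set δ : ℝ := δE * Real.sqrt m₀ with hδdef
  have hδ0 : 0 < δ := mul_pos hδE0 (Real.sqrt_pos.2 hm₀pos)
  clear_value CE ε r₂ m₀ δ
  refine ⟨δ, ε, hδ0, hε0, fun f hf => ?_⟩
  -- the data restricted to the interior
  set fs : ↥(G.intr Ω) → ℝ := fun x => f x.1 with hfsdef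
  have hΦ0 : ∀ x : ↥(G.intr Ω), Φ 0 x = g x.1 0 := by
    intro x
    have hz : ∀ t, extZ G Ω (0 : ↥(G.intr Ω) → ℝ) t = 0 := by
      intro t; unfold extZ; split <;> simp
    have hlap0 : G.lap (extZ G Ω (0 : ↥(G.intr Ω) → ℝ)) x.1 = 0 := by
      rw [Aux.lap_eq]
      have : ∀ y ∈ (G.locFin x.1).toFinset,
          G.w x.1 y * (extZ G Ω (0 : ↥(G.intr Ω) → ℝ) y
            - extZ G Ω (0 : ↥(G.intr Ω) → ℝ) x.1) = 0 := by
        intro y _; rw [hz, hz]; ring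
      rw [Finset.sum_congr rfl this]
      simp
    simp [Φ, hlap0]
  -- `fs` lies in the good ball
  have hfsball : fs ∈ Metric.ball (Φ 0) δE := by
    rw [Metric.mem_ball, dist_eq_norm]
    rw [pi_norm_lt_iff hδE0]
    intro i
    have hT : (∑ x ∈ hfin.toFinset, (f x - g x 0)^2 * G.mes x) < δ^2 := by
      have := hf
      rw [Aux.lpNorm_eq_sqrt G hfin] at this
      exact (Real.sqrt_lt' hδ0).1 this
    have hterm : (f i.1 - g i.1 0)^2 * G.mes i.1
        ≤ ∑ x ∈ hfin.toFinset, (f x - g x 0)^2 * G.mes x :=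
      Finset.single_le_sum (f := fun x => (f x - g x 0)^2 * G.mes x)
        (fun x hx => mul_nonneg (sq_nonneg _) (Aux.mes_nonneg G x)) (by simpa using i.2.1)
    have hm₀i : m₀ ≤ G.mes i.1 := hm₀le i.1 i.2.1
    have hδsq : δ^2 = δE^2 * m₀ := by
      rw [hδdef, mul_pow, Real.sq_sqrt hm₀pos.le]
    have hsq : (f i.1 - g i.1 0)^2 < δE^2 := by
      have e1 : (f i.1 - g i.1 0)^2 * m₀ ≤ (f i.1 - g i.1 0)^2 * G.mes i.1 :=
        mul_le_mul_of_nonneg_left hm₀i (sq_nonneg _)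
      have e2 : (f i.1 - g i.1 0)^2 * m₀ < δE^2 * m₀ := by
        rw [← hδsq] at *
        linarith
      exact lt_of_mul_lt_mul_right e2 hm₀pos.le
    have : |f i.1 - g i.1 0| < δE := by
      by_contra hcon
      push_neg at hcon
      nlinarith [sq_abs (f i.1 - g i.1 0), abs_nonneg (f i.1 - g i.1 0)]
    simpa [hΦ0 i, Real.norm_eq_abs, hfsdef] using this
  obtain ⟨v, hvball, hΦv⟩ := hball hfsball
  rw [Metric.mem_ball, dist_zero_right] at hvball
  set u : V → ℝ := extZ G Ω v with hudef
  -- basic facts about u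
  have huint : ∀ x (hx : x ∈ G.intr Ω), u x = v ⟨x, hx⟩ := fun x hx => Aux.extZ_mem G Ω v hx
  have hubd : ∀ x ∈ G.bdry Ω, u x = 0 := fun x hx =>
    Aux.extZ_not_mem G Ω v (fun h => h.2 hx)
  have huout : ∀ t, |u t| ≤ ‖v‖ := by
    intro t
    by_cases ht : t ∈ G.intr Ω
    · rw [show u t = v ⟨t, ht⟩ from huint t ht]
      simpa [Real.norm_eq_abs] using norm_le_pi_norm v ⟨t, ht⟩
    · rw [show u t = 0 from Aux.extZ_not_mem G Ω v ht]
      simpa using norm_nonneg v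
  -- the equation for u
  have hueq : ∀ x ∈ G.intr Ω, -G.lap u x + g x (u x) = f x := by
    intro x hx
    have := congrFun hΦv ⟨x, hx⟩
    rw [huint x hx]
    simpa [Φ, hfsdef, hudef] using this
  -- energy bound for u
  have hwu : G.wNorm Ω 1 2 u < ε := by
    rw [Aux.wNorm_eq_sqrt_enE G hfin hm, Real.sqrt_lt' hε0]
    have h1 : enE G hfin.toFinset u ≤ CE * ‖v‖^2 := by
      have := Aux.enE_le G hfin.toFinset u ‖v‖ huout
      calc enE G hfin.toFinset u ≤ _ := this
        _ = CE * ‖v‖^2 := by rw [hCEdef]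
    have hvr₂ : ‖v‖ < r₂ := hvball
    have hr₂le : r₂ ≤ ε / Real.sqrt (CE + 1) := by rw [hr₂def]; exact min_le_right _ _
    have hsqCE : (Real.sqrt (CE+1))^2 = CE + 1 := Real.sq_sqrt (by linarith)
    have hv0 : 0 ≤ ‖v‖ := norm_nonneg v
    have h2 : CE * ‖v‖^2 < ε^2 := by
      have hv2 : ‖v‖^2 < r₂^2 := by nlinarith
      have hCE1 : 0 < CE + 1 := by linarith
      have hε2 : 0 < ε^2 := by positivity
      have hv2 : ‖v‖^2 < r₂^2 := by
        have := pow_lt_pow_left₀ hvr₂ hv0 (n := 2) (by norm_num)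
        exact this
      have hr₂sq : r₂^2 ≤ (ε / Real.sqrt (CE+1))^2 := pow_le_pow_left₀ hr₂0.le hr₂le 2
      have hr₂2 : r₂^2 ≤ ε^2 / (CE+1) := by
        calc r₂^2 ≤ (ε / Real.sqrt (CE+1))^2 := hr₂sq
          _ = ε^2 / (CE+1) := by rw [div_pow, hsqCE]
      rcases eq_or_lt_of_le hCE0 with hCEz | hCEpos
      · rw [← hCEz, zero_mul]; exact hε2
      · calc CE * ‖v‖^2 < CE * r₂^2 := mul_lt_mul_of_pos_left hv2 hCEpos
          _ ≤ CE * (ε^2/(CE+1)) := mul_le_mul_of_nonneg_left hr₂2 hCE0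
          _ < ε^2 := by
              rw [mul_div_assoc', div_lt_iff₀ hCE1]
              nlinarith
    linarith
  refine ⟨u, ⟨hueq, hubd, hwu⟩, fun u' ⟨hueq', hubd', hwu'⟩ => ?_⟩
  -- uniqueness
  set v' : ↥(G.intr Ω) → ℝ := fun x => u' x.1 with hv'def
  have hlapagree : ∀ x, x ∈ G.intr Ω → G.lap (extZ G Ω v') x = G.lap u' x := by
    intro x hx
    rw [Aux.lap_eq, Aux.lap_eq]
    congr 1
    refine Finset.sum_congr rfl fun y hy => ?_
    have hwxy : G.w x y ≠ 0 := by simpa using hy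
    have hadj : G.Adj x y := lt_of_le_of_ne (G.nonneg x y) (Ne.symm hwxy)
    have hyΩ : y ∈ Ω := by
      by_contra hyn
      exact hx.2 ⟨hx.1, y, hyn, hadj⟩
    have hgx : extZ G Ω v' x = u' x := Aux.extZ_mem G Ω v' hx
    have hgy : extZ G Ω v' y = u' y := by
      by_cases hyint : y ∈ G.intr Ω
      · exact Aux.extZ_mem G Ω v' hyint
      · have hybd : y ∈ G.bdry Ω := by
          by_contra hyb
          exact hyint ⟨hyΩ, hyb⟩
        rw [Aux.extZ_not_mem G Ω v' hyint, hubd' y hybd]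
    rw [hgx, hgy]
  have hΦv' : Φ v' = fs := by
    funext x
    have := hueq' x.1 x.2
    have hl := hlapagree x.1 x.2
    simp only [Φ, hfsdef, hv'def]
    rw [hl]
    exact this
  -- v' is in the uniqueness ball
  have henu' : enE G hfin.toFinset u' < ε^2 := by
    have := hwu'
    rw [Aux.wNorm_eq_sqrt_enE G hfin hm, Real.sqrt_lt' hε0] at this
    exact this
  have hv'r : ‖v'‖ < r := by
    rw [pi_norm_lt_iff hr0]
    intro i
    have hp := hCp i.1 i.2.1 u' hubd'
    have hsqε : ε^2 = r^2/(Cp+1) := by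
      rw [hεdef, div_pow, Real.sq_sqrt (by linarith : (0:ℝ) ≤ Cp + 1)]
    have hCp1 : 0 < Cp + 1 := by linarith
    have hs : (u' i.1)^2 < r^2 := by
      have h1 : (u' i.1)^2 ≤ Cp * enE G hfin.toFinset u' := hp
      have h2 : Cp * enE G hfin.toFinset u' ≤ Cp * ε^2 :=
        mul_le_mul_of_nonneg_left henu'.le hCp0
      have hr2 : 0 < r^2 := by positivity
      have h3 : Cp * ε^2 < r^2 := by
        rw [hsqε, mul_div_assoc', div_lt_iff₀ hCp1]
        nlinarith
      linarith
    have : |u' i.1| < r := by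
      by_contra hcon
      push_neg at hcon
      nlinarith [sq_abs (u' i.1), abs_nonneg (u' i.1)]
    simpa [Real.norm_eq_abs, hv'def] using this
  have hvr : ‖v‖ < r := lt_of_lt_of_le hvball (by rw [hr₂def]; exact min_le_left _ _)
  have hinv1 : hF.localInverse Φ _ _ (Φ v) = v := hrinv (by rwa [dist_zero_right])
  have hinv2 : hF.localInverse Φ _ _ (Φ v') = v' := hrinv (by rwa [dist_zero_right])
  have hvv' : v' = v := by
    rw [← hinv1, ← hinv2, hΦv, hΦv']
  intro x hx
  by_cases hxb : x ∈ G.bdry Ω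
  · rw [hubd' x hxb, hubd x hxb]
  · have hxint : x ∈ G.intr Ω := ⟨hx, hxb⟩
    have h1 : u' x = v' ⟨x, hxint⟩ := rfl
    rw [h1, hvv', ← huint x hxint]
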